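/- Governed interpretation safety: for every base handler h and every program t over directive events, the governed interpretation interp (Gov h) t is safe at permission level false, i.e., gov_safe false (interp (Gov h) t). -/

import Mathlib

/-- The polynomial functor whose M-type is the type of interaction trees
over events `E` with answer types `Ans` and return type `R`. -/
def itreeP (E : Type) (Ans : E → Type) (R : Type) : PFunctor where
  A := R ⊕ Unit ⊕ E
  B := fun a =>
    match a with
    | .inl _ => Empty
    | .inr (.inl _) => PUnit
    | .inr (.inr e) => Ans e

/-- Coinductive interaction trees, as the final coalgebra (M-type) of `itreeP`. -/
def ITree (E : Type) (Ans : E → Type) (R : Type) : Type := (itreeP E Ans R).M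

namespace ITree

variable {E : Type} {Ans : E → Type} {R : Type}

def Ret (v : R) : ITree E Ans R := PFunctor.M.mk ⟨Sum.inl v, Empty.elim⟩

def Tau (t : ITree E Ans R) : ITree E Ans R :=
  PFunctor.M.mk ⟨Sum.inr (Sum.inl ()), fun _ => t⟩

def Vis (e : E) (k : Ans e → ITree E Ans R) : ITree E Ans R :=
  PFunctor.M.mk ⟨Sum.inr (Sum.inr e), k⟩

/-- Silent divergence: `spin = Tau spin`. -/
def spin : ITree E Ans R :=
  PFunctor.M.corec (fun _ : Unit => ⟨Sum.inr (Sum.inl ()), fun _ => ()⟩) ()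

end ITree

/-- Monadic bind on interaction trees, defined by corecursion:
`bind (Ret v) k = k v`, `bind (Tau t) k = Tau (bind t k)`,
`bind (Vis e h) k = Vis e (fun x => bind (h x) k)`. -/
def ITree.bind {E : Type} {Ans : E → Type} {R S : Type}
    (t : ITree E Ans R) (k : R → ITree E Ans S) : ITree E Ans S :=
  PFunctor.M.corec
    (fun st : ITree E Ans R ⊕ ITree E Ans S =>
      match st with
      | .inl t =>
        match PFunctor.M.dest t with
        | ⟨Sum.inl v, _⟩ =>
          let d := PFunctor.M.dest (k v)
          ⟨d.1, fun x => Sum.inr (d.2 x)⟩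
        | ⟨Sum.inr (Sum.inl _), c⟩ =>
          ⟨Sum.inr (Sum.inl ()), fun _ => Sum.inl (c PUnit.unit)⟩
        | ⟨Sum.inr (Sum.inr e), c⟩ =>
          ⟨Sum.inr (Sum.inr e), fun x => Sum.inl (c x)⟩
      | .inr u =>
        let d := PFunctor.M.dest u
        ⟨d.1, fun x => Sum.inr (d.2 x)⟩)
    (Sum.inl t)

inductive DirectiveE : Type
  | MemoryOp (params : Nat) | DBOp (params : Nat) | FileOp (params : Nat)
  | LLMCall (params : Nat) | LLMCallStream (params : Nat)
  | CallMachine (params : Nat) | HTTPRequest (params : Nat) | ExecOp (params : Nat)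
  | GraphQLRequest (params : Nat) | WebSocketOp (params : Nat) | MCPCall (params : Nat)
  | ObserveOp (params : Nat)

def is_memory_event : DirectiveE → Bool
  | .MemoryOp _ | .DBOp _ | .FileOp _ => true
  | _ => false

def is_reason_event : DirectiveE → Bool
  | .LLMCall _ | .LLMCallStream _ => true
  | _ => false

def is_call_event : DirectiveE → Bool
  | .CallMachine _ | .HTTPRequest _ | .ExecOp _
  | .GraphQLRequest _ | .WebSocketOp _ | .MCPCall _ => true
  | _ => false

def is_observe_event : DirectiveE → Bool
  | .ObserveOp _ => true
  | _ => false

/-- Every directive is answered by a natural number. -/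
def DAns : DirectiveE → Type := fun _ => Nat

/-- Governance-only events: the pre-check and post-instrumentation stages. -/
inductive GovStage : Type
  | trustCheck | permissionCheck | phaseValidation | preHooks
  | guardrails | provenanceRecord | eventBroadcast
section GovSafe

-- Governance-only events (each answered by a `Bool`) and I/O events.
variable {IOE : Type} {IOAns : IOE → Type} {R : Type}

/-- Answer types for the combined event type `GovIOE = GovStage ⊕ IOE`. -/
def GovIOAns (IOAns : IOE → Type) : GovStage ⊕ IOE → Type
  | .inl _ => Bool
  | .inr e => IOAns e

/-- One step of the coinductive safety predicate `gov_safe`: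
returns are safe; `Tau` preserves the level; governance events are safe at any
level and raise the level to `true`; bare I/O events require level `true`. -/
def gov_safeF
    (F : Bool → ITree (GovStage ⊕ IOE) (GovIOAns IOAns) R → Prop)
    (allowed : Bool) (t : ITree (GovStage ⊕ IOE) (GovIOAns IOAns) R) : Prop :=
  (∃ v : R, t = ITree.Ret v) ∨
  (∃ t', t = ITree.Tau t' ∧ F allowed t') ∨
  (∃ (g : GovStage) (k : Bool → ITree (GovStage ⊕ IOE) (GovIOAns IOAns) R),
      t = ITree.Vis (Sum.inl g) k ∧ ∀ b : Bool, F true (k b)) ∨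
  (∃ (e : IOE) (k : IOAns e → ITree (GovStage ⊕ IOE) (GovIOAns IOAns) R),
      t = ITree.Vis (Sum.inr e) k ∧ allowed = true ∧ ∀ x, F true (k x))

/-- `gov_safe` is the greatest fixed point of `gov_safeF`. -/
def gov_safe (allowed : Bool)
    (t : ITree (GovStage ⊕ IOE) (GovIOAns IOAns) R) : Prop :=
  ∃ F, F allowed t ∧ ∀ a u, F a u → gov_safeF F a u

end GovSafe

section Governance

variable {IOE : Type} {IOAns : IOE → Type}

/-- Lift an I/O computation into the combined event type, injecting I/O events
via `Sum.inr`. -/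
def liftIO {R : Type} (t : ITree IOE IOAns R) :
    ITree (GovStage ⊕ IOE) (GovIOAns IOAns) R :=
  PFunctor.M.corec
    (fun u : ITree IOE IOAns R =>
      match PFunctor.M.dest u with
      | ⟨Sum.inl v, _⟩ => ⟨Sum.inl v, Empty.elim⟩
      | ⟨Sum.inr (Sum.inl _), c⟩ =>
        ⟨Sum.inr (Sum.inl ()), fun _ => c PUnit.unit⟩
      | ⟨Sum.inr (Sum.inr e), c⟩ =>
        ⟨Sum.inr (Sum.inr (Sum.inr e)), fun x => c x⟩)
    t

/-- A pre-governance check: emit a governance event, continue on `true`,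
deny by divergence on `false`. -/
def govCheck {R : Type} (g : GovStage)
    (next : ITree (GovStage ⊕ IOE) (GovIOAns IOAns) R) :
    ITree (GovStage ⊕ IOE) (GovIOAns IOAns) R :=
  ITree.Vis (Sum.inl g) (fun b : Bool => if b then next else ITree.spin)

/-- Post-governance instrumentation: emit a governance event and continue. -/
def govPost {R : Type} (g : GovStage)
    (next : ITree (GovStage ⊕ IOE) (GovIOAns IOAns) R) :
    ITree (GovStage ⊕ IOE) (GovIOAns IOAns) R :=
  ITree.Vis (Sum.inl g) (fun _ : Bool => next)

/-- A base handler interprets each directive as an I/O computation. -/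
def BaseHandler (IOE : Type) (IOAns : IOE → Type) : Type :=
  (d : DirectiveE) → ITree IOE IOAns (DAns d)

/-- The governance operator `𝒢`: pre-checks (short-circuiting to `spin` on
failure), then the lifted base handler, then post-instrumentation. -/
def Gov (h : BaseHandler IOE IOAns) (d : DirectiveE) :
    ITree (GovStage ⊕ IOE) (GovIOAns IOAns) (DAns d) :=
  govCheck .trustCheck (govCheck .permissionCheck (govCheck .phaseValidation
    (govCheck .preHooks
      (ITree.bind (liftIO (h d)) (fun r =>
        govPost .guardrails (govPost .provenanceRecord (govPost .eventBroadcast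
          (ITree.Ret r))))))))

/-- The interaction-tree interpreter: each directive `Vis d k` is replaced by
`bind (Gov h d) k`, defined corecursively (with administrative `Tau` steps). -/
def interpGov {R : Type} (h : BaseHandler IOE IOAns)
    (t : ITree DirectiveE DAns R) :
    ITree (GovStage ⊕ IOE) (GovIOAns IOAns) R :=
  PFunctor.M.corec
    (fun st : ITree DirectiveE DAns R ⊕
        (ITree (GovStage ⊕ IOE) (GovIOAns IOAns) Nat ×
          (Nat → ITree DirectiveE DAns R)) =>
      match st with
      | .inl t =>
        match PFunctor.M.dest t with
        | ⟨Sum.inl v, _⟩ => ⟨Sum.inl v, Empty.elim⟩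
        | ⟨Sum.inr (Sum.inl _), c⟩ =>
          ⟨Sum.inr (Sum.inl ()), fun _ => Sum.inl (c PUnit.unit)⟩
        | ⟨Sum.inr (Sum.inr d), c⟩ =>
          ⟨Sum.inr (Sum.inl ()), fun _ => Sum.inr (Gov h d, fun x => c x)⟩
      | .inr (u, κ) =>
        match PFunctor.M.dest u with
        | ⟨Sum.inl x, _⟩ =>
          ⟨Sum.inr (Sum.inl ()), fun _ => Sum.inl (κ x)⟩
        | ⟨Sum.inr (Sum.inl _), c⟩ =>
          ⟨Sum.inr (Sum.inl ()), fun _ => Sum.inr (c PUnit.unit, κ)⟩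
        | ⟨Sum.inr (Sum.inr e), c⟩ =>
          ⟨Sum.inr (Sum.inr e), fun y => Sum.inr (c y, κ)⟩)
    (Sum.inl t)

end Governance

section AuxProof

variable {IOE : Type} {IOAns : IOE → Type}

/-- The state space of the `interpGov` corecursion. -/
def GState (IOE : Type) (IOAns : IOE → Type) (R : Type) : Type :=
  ITree DirectiveE DAns R ⊕
    (ITree (GovStage ⊕ IOE) (GovIOAns IOAns) Nat ×
      (Nat → ITree DirectiveE DAns R))

/-- The step function of the `interpGov` corecursion, named. -/
def istep {R : Type} (h : BaseHandler IOE IOAns) :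
    GState IOE IOAns R →
      (itreeP (GovStage ⊕ IOE) (GovIOAns IOAns) R).Obj (GState IOE IOAns R) :=
  fun st =>
      match st with
      | .inl t =>
        match PFunctor.M.dest t with
        | ⟨Sum.inl v, _⟩ => ⟨Sum.inl v, Empty.elim⟩
        | ⟨Sum.inr (Sum.inl _), c⟩ =>
          ⟨Sum.inr (Sum.inl ()), fun _ => Sum.inl (c PUnit.unit)⟩
        | ⟨Sum.inr (Sum.inr d), c⟩ =>
          ⟨Sum.inr (Sum.inl ()), fun _ => Sum.inr (Gov h d, fun x => c x)⟩
      | .inr (u, κ) =>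
        match PFunctor.M.dest u with
        | ⟨Sum.inl x, _⟩ =>
          ⟨Sum.inr (Sum.inl ()), fun _ => Sum.inl (κ x)⟩
        | ⟨Sum.inr (Sum.inl _), c⟩ =>
          ⟨Sum.inr (Sum.inl ()), fun _ => Sum.inr (c PUnit.unit, κ)⟩
        | ⟨Sum.inr (Sum.inr e), c⟩ =>
          ⟨Sum.inr (Sum.inr e), fun y => Sum.inr (c y, κ)⟩

theorem interpGov_eq_corec {R : Type} (h : BaseHandler IOE IOAns)
    (t : ITree DirectiveE DAns R) :
    interpGov h t = PFunctor.M.corec (istep h) (Sum.inl t) := rfl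

/-- The bisimulation-style witness relation for `gov_safe`. -/
def FRel {R : Type} (h : BaseHandler IOE IOAns) (a : Bool)
    (u : ITree (GovStage ⊕ IOE) (GovIOAns IOAns) R) : Prop :=
  ∃ s : GState IOE IOAns R,
    u = PFunctor.M.corec (istep h) s ∧
    (∀ w κ, s = Sum.inr (w, κ) →
      a = true ∨ ∃ g : GovStage,
        (PFunctor.M.dest w).1 = Sum.inr (Sum.inr (Sum.inl g)))

/-- Rebuild an M-tree equality from its destructed form. -/
theorem M.eq_mk {P : PFunctor} {x : P.M} {o : P.Obj P.M}
    (hx : PFunctor.M.dest x = o) : x = PFunctor.M.mk o := by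
  rw [← hx, PFunctor.M.mk_dest]

theorem FRel_post {R : Type} (h : BaseHandler IOE IOAns)
    (a : Bool) (u : _) (hu : FRel (R := R) h a u) : gov_safeF (FRel h) a u := by
  obtain ⟨s, rfl, hs⟩ := hu
  have hd := PFunctor.M.dest_corec (istep h) s
  cases s with
  | inl t =>
    rcases h1 : PFunctor.M.dest t with ⟨nd, c⟩
    rcases nd with v | u' | d
    · -- Ret
      left
      refine ⟨v, ?_⟩
      apply M.eq_mk
      rw [hd]
      simp only [istep, h1, PFunctor.map_eq]
      congr 1
      exact congrArg (Sigma.mk _) (funext fun x => x.elim)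
    · -- Tau
      right; left
      refine ⟨PFunctor.M.corec (istep h) (Sum.inl (c PUnit.unit)), ?_, ?_⟩
      · apply M.eq_mk
        rw [hd]
        simp only [istep, h1, PFunctor.map_eq]
        rfl
      · exact ⟨_, rfl, by intro w κ hw; exact absurd hw (by simp)⟩
    · -- directive: administrative Tau, entering Gov
      right; left
      refine ⟨PFunctor.M.corec (istep h) (Sum.inr (Gov h d, fun x => c x)), ?_, ?_⟩
      · apply M.eq_mk
        rw [hd]
        simp only [istep, h1, PFunctor.map_eq]
        rfl
      · refine ⟨_, rfl, ?_⟩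
        rintro w κ hwκ
        right
        refine ⟨GovStage.trustCheck, ?_⟩
        have hw : w = Gov h d := (congrArg Prod.fst (Sum.inr.inj hwκ)).symm
        rw [hw]
        rfl
  | inr p =>
    obtain ⟨w, κ⟩ := p
    rcases h1 : PFunctor.M.dest w with ⟨nd, c⟩
    have hcond := hs w κ rfl
    rcases nd with x | u' | e
    · -- w returned: administrative Tau back to the outer tree
      right; left
      refine ⟨PFunctor.M.corec (istep h) (Sum.inl (κ x)), ?_, ?_⟩
      · apply M.eq_mk
        rw [hd]
        simp only [istep, h1, PFunctor.map_eq]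
        rfl
      · exact ⟨_, rfl, by intro w' κ' hw; exact absurd hw (by simp)⟩
    · -- Tau inside w
      have ha : a = true := by
        rcases hcond with ha | ⟨g, hg⟩
        · exact ha
        · rw [h1] at hg
          cases hg
      subst ha
      right; left
      refine ⟨PFunctor.M.corec (istep h) (Sum.inr (c PUnit.unit, κ)), ?_, ?_⟩
      · apply M.eq_mk
        rw [hd]
        simp only [istep, h1, PFunctor.map_eq]
        rfl
      · exact ⟨_, rfl, fun _ _ _ => Or.inl rfl⟩
    · -- event inside w: governance or I/O
      rcases e with g | e
      · -- governance event
        right; right; left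
        refine ⟨g, fun b => PFunctor.M.corec (istep h) (Sum.inr (c b, κ)), ?_, ?_⟩
        · apply M.eq_mk
          rw [hd]
          simp only [istep, h1, PFunctor.map_eq]
          rfl
        · intro b
          exact ⟨_, rfl, fun _ _ _ => Or.inl rfl⟩
      · -- I/O event: requires a = true
        have ha : a = true := by
          rcases hcond with ha | ⟨g, hg⟩
          · exact ha
          · rw [h1] at hg
            cases hg
        subst ha
        right; right; right
        refine ⟨e, fun y => PFunctor.M.corec (istep h) (Sum.inr (c y, κ)), ?_, rfl, ?_⟩
        · apply M.eq_mk
          rw [hd]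
          simp only [istep, h1, PFunctor.map_eq]
          rfl
        · intro y
          exact ⟨_, rfl, fun _ _ _ => Or.inl rfl⟩

end AuxProof

/-- **Governed Interpretation Safety**: for every base handler `h` and every
program `t` over directive events, the governed interpretation is safe at
permission level `false`. -/
theorem governed_interp_safe :
    ∀ (IOE : Type) (IOAns : IOE → Type) (h : BaseHandler IOE IOAns)
      (R : Type) (t : ITree DirectiveE DAns R),
      gov_safe false (interpGov h t) := by
  intro IOE IOAns h R t
  refine ⟨FRel h, ⟨Sum.inl t, interpGov_eq_corec h t, ?_⟩, FRel_post h⟩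
  intro w κ hw
  exact absurd hw (by simp)
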